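/- arXiv:1309.2082 — 2 statements merged into one kernel-verified Lean document; each statement's English description precedes it below -/
import Mathlib

section
/- The Rodrigues formula for Hermite polynomials: H_n(x,s) = e^{x²/(2s)} · (−s d/dx)^n e^{-x²/(2s)}, i.e., applying n times the operator f ↦ −s·f' to the function x ↦ e^{-x²/(2s)} and multiplying by e^{x²/(2s)} yields H_n(x,s). -/
/-- Bivariate Hermite polynomial `H n x s = ∑ (-1)^k C(n,2k)(2k-1)!! s^k x^(n-2k)`. -/
noncomputable def hermiteH (n : ℕ) (x s : ℝ) : ℝ :=
  ∑ k ∈ Finset.range (n / 2 + 1),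
    (-1 : ℝ) ^ k * (n.choose (2 * k) : ℝ) * (∏ i ∈ Finset.range k, (2 * i + 1 : ℝ))
      * s ^ k * x ^ (n - 2 * k)

lemma hermiteH_zero (x s : ℝ) : hermiteH 0 x s = 1 := by
  simp [hermiteH]

lemma hermiteH_one (x s : ℝ) : hermiteH 1 x s = x := by
  simp [hermiteH]

lemma choose_key (n k : ℕ) :
    (n+2).choose (2*k+2) * (2*k+1) =
      (n+1).choose (2*k+2) * (2*k+1) + (n+1) * n.choose (2*k) := by
  have h1 : (n+2).choose (2*k+2) = (n+1).choose (2*k+1) + (n+1).choose (2*k+2) :=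
    Nat.choose_succ_succ (n+1) (2*k+1)
  have h2 : (n+1) * n.choose (2*k) = (n+1).choose (2*k+1) * (2*k+1) :=
    Nat.add_one_mul_choose_eq n (2*k)
  rw [h1, h2]; ring

lemma hasDerivAt_hermiteH (n : ℕ) (s x : ℝ) :
    HasDerivAt (fun y => hermiteH (n+1) y s) (((n:ℝ)+1) * hermiteH n x s) x := by
  have h : HasDerivAt (fun y : ℝ => ∑ k ∈ Finset.range ((n+1)/2+1),
      (-1:ℝ)^k * (((n+1).choose (2*k) : ℕ) : ℝ) * (∏ i ∈ Finset.range k, (2*i+1:ℝ)) * s^k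
        * y^(n+1-2*k))
      (∑ k ∈ Finset.range ((n+1)/2+1),
      (-1:ℝ)^k * (((n+1).choose (2*k) : ℕ) : ℝ) * (∏ i ∈ Finset.range k, (2*i+1:ℝ)) * s^k *
        (((n+1-2*k : ℕ):ℝ) * x^(n+1-2*k-1))) x := by
    apply HasDerivAt.fun_sum
    intro k _
    exact (hasDerivAt_pow (n+1-2*k) x).const_mul _
  have heq : ((n:ℝ)+1) * hermiteH n x s
      = ∑ k ∈ Finset.range ((n+1)/2+1),
          (-1:ℝ)^k * (((n+1).choose (2*k) : ℕ) : ℝ) * (∏ i ∈ Finset.range k, (2*i+1:ℝ)) * s^k *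
            (((n+1-2*k : ℕ):ℝ) * x^(n+1-2*k-1)) := by
    unfold hermiteH
    rw [Finset.mul_sum]
    rw [← Finset.sum_subset (show Finset.range (n/2+1) ⊆ Finset.range ((n+1)/2+1) from
      Finset.range_subset_range.mpr (by omega))]
    · apply Finset.sum_congr rfl
      intro k hk
      simp only [Finset.mem_range] at hk
      have h2k : 2*k ≤ n := by omega
      rw [show n+1-2*k-1 = n-2*k from by omega]
      rw [Nat.cast_sub (show 2*k ≤ n+1 by omega)]
      push_cast
      have key : ((n.choose (2*k) : ℕ) : ℝ) * ((n:ℝ)+1)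
          = (((n+1).choose (2*k) : ℕ) : ℝ) * ((n:ℝ)+1-2*k) := by
        have h := Nat.choose_mul_succ_eq n (2*k)
        have h2 : ((n.choose (2*k) * (n+1) : ℕ) : ℝ)
            = (((n+1).choose (2*k) * (n+1-2*k) : ℕ) : ℝ) := by exact_mod_cast h
        rw [Nat.cast_mul, Nat.cast_mul, Nat.cast_sub (show 2*k ≤ n+1 by omega)] at h2
        push_cast at h2
        linarith
      linear_combination ((-1:ℝ)^k * (∏ i ∈ Finset.range k, (2*(i:ℝ)+1)) * s^k * x^(n-2*k)) * key
    · intro k hk hk'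
      simp only [Finset.mem_range] at hk hk'
      have hz : n+1-2*k = 0 := by omega
      rw [hz]
      simp
  rw [heq]
  exact h

lemma hermiteH_rec (n : ℕ) (x s : ℝ) :
    hermiteH (n+2) x s = x * hermiteH (n+1) x s - s * ((n:ℝ)+1) * hermiteH n x s := by
  unfold hermiteH
  rw [Finset.mul_sum, Finset.mul_sum]
  have e2 : (n+2)/2+1 = (n/2+1)+1 := by omega
  rw [e2]
  conv_lhs => rw [Finset.sum_range_succ']
  have hbig : (∑ k ∈ Finset.range ((n+1)/2+1),
        x * ((-1:ℝ)^k * (((n+1).choose (2*k) : ℕ) : ℝ) * (∏ i ∈ Finset.range k, (2*(i:ℝ)+1)) * s^k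
          * x^(n+1-2*k)))
      = ∑ k ∈ Finset.range ((n/2+1)+1),
        x * ((-1:ℝ)^k * (((n+1).choose (2*k) : ℕ) : ℝ) * (∏ i ∈ Finset.range k, (2*(i:ℝ)+1)) * s^k
          * x^(n+1-2*k)) := by
    apply Finset.sum_subset (Finset.range_subset_range.mpr (by omega))
    intro k hk hk'
    simp only [Finset.mem_range] at hk hk'
    have hc : (n+1).choose (2*k) = 0 := Nat.choose_eq_zero_of_lt (by omega)
    rw [hc]
    simp
  conv_rhs => rw [hbig, Finset.sum_range_succ']
  have hterm : ∀ k ∈ Finset.range (n/2+1),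
      (-1:ℝ)^(k+1) * (((n+2).choose (2*(k+1)) : ℕ) : ℝ)
          * (∏ i ∈ Finset.range (k+1), (2*(i:ℝ)+1)) * s^(k+1) * x^(n+2-2*(k+1))
        = x * ((-1:ℝ)^(k+1) * (((n+1).choose (2*(k+1)) : ℕ) : ℝ)
            * (∏ i ∈ Finset.range (k+1), (2*(i:ℝ)+1)) * s^(k+1) * x^(n+1-2*(k+1)))
          - s * ((n:ℝ)+1) * ((-1:ℝ)^k * ((n.choose (2*k) : ℕ) : ℝ)
            * (∏ i ∈ Finset.range k, (2*(i:ℝ)+1)) * s^k * x^(n-2*k)) := by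
    intro k hk
    simp only [Finset.mem_range] at hk
    rw [Finset.prod_range_succ]
    rw [show 2*(k+1) = 2*k+2 from by ring]
    have key : (((n+2).choose (2*k+2) : ℕ) : ℝ) * (2*(k:ℝ)+1)
        = (((n+1).choose (2*k+2) : ℕ) : ℝ) * (2*(k:ℝ)+1)
          + ((n:ℝ)+1) * ((n.choose (2*k) : ℕ) : ℝ) := by
      exact_mod_cast choose_key n k
    rcases lt_or_eq_of_le (show 2*k ≤ n from by omega) with h | h
    · rw [show n-2*k = (n-2*k-1)+1 from by omega,
        show n+2-(2*k+2) = (n-2*k-1)+1 from by omega,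
        show n+1-(2*k+2) = n-2*k-1 from by omega]
      generalize n - 2*k - 1 = m
      linear_combination (-(-1:ℝ)^k * (∏ i ∈ Finset.range k, (2*(i:ℝ)+1)) * s^(k+1)
        * x^(m+1)) * key
    · have hn : n = 2*k := h.symm
      subst hn
      rw [show 2*k+2-(2*k+2) = 0 from by omega, show 2*k+1-(2*k+2) = 0 from by omega,
        show 2*k-2*k = 0 from by omega, Nat.choose_self,
        show (2*k+1).choose (2*k+2) = 0 from Nat.choose_eq_zero_of_lt (by omega),
        Nat.choose_self]
      push_cast
      ring
  rw [Finset.sum_congr rfl hterm, Finset.sum_sub_distrib]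
  have h0 : (-1:ℝ)^0 * (((n+2).choose (2*0) : ℕ) : ℝ)
        * (∏ i ∈ Finset.range 0, (2*(i:ℝ)+1)) * s^0 * x^(n+2-2*0)
      = x * ((-1:ℝ)^0 * (((n+1).choose (2*0) : ℕ) : ℝ)
        * (∏ i ∈ Finset.range 0, (2*(i:ℝ)+1)) * s^0 * x^(n+1-2*0)) := by
    simp [← pow_succ']
  rw [h0]
  ring

lemma hasDerivAt_hermiteH' (n : ℕ) (s x : ℝ) :
    HasDerivAt (fun y => hermiteH n y s) ((n:ℝ) * hermiteH (n-1) x s) x := by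
  cases n with
  | zero =>
    simp only [Nat.cast_zero, zero_mul]
    have : (fun y : ℝ => hermiteH 0 y s) = fun _ => (1:ℝ) := funext fun y => hermiteH_zero y s
    rw [this]
    exact hasDerivAt_const x 1
  | succ m =>
    simpa using hasDerivAt_hermiteH m s x

lemma hermiteH_rec' (n : ℕ) (x s : ℝ) :
    hermiteH (n+1) x s = x * hermiteH n x s - s * (n:ℝ) * hermiteH (n-1) x s := by
  cases n with
  | zero => simp [hermiteH_one, hermiteH_zero]
  | succ m => simpa using hermiteH_rec m x s

lemma gaussDeriv (s : ℝ) (y : ℝ) :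
    HasDerivAt (fun t : ℝ => Real.exp (-(t^2)/(2*s)))
      (Real.exp (-(y^2)/(2*s)) * (-(2*y)/(2*s))) y := by
  have h : HasDerivAt (fun t : ℝ => -(t^2)/(2*s)) (-(2*y)/(2*s)) y := by
    have := ((hasDerivAt_pow 2 y).neg.div_const (2*s))
    simpa using this
  exact h.exp

lemma rodrigues_aux (s : ℝ) (hs : 0 < s) (n : ℕ) :
    ((fun f : ℝ → ℝ => fun y => -s * deriv f y)^[n]
        (fun y => Real.exp (-(y ^ 2) / (2 * s)))) =
      fun y => hermiteH n y s * Real.exp (-(y ^ 2) / (2 * s)) := by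
  induction n with
  | zero =>
    funext y
    simp [hermiteH_zero]
  | succ m ih =>
    rw [Function.iterate_succ_apply', ih]
    funext y
    have hd : deriv (fun t : ℝ => hermiteH m t s * Real.exp (-(t^2)/(2*s))) y
        = ((m:ℝ) * hermiteH (m-1) y s) * Real.exp (-(y^2)/(2*s))
          + hermiteH m y s * (Real.exp (-(y^2)/(2*s)) * (-(2*y)/(2*s))) :=
      ((hasDerivAt_hermiteH' m s y).mul (gaussDeriv s y)).deriv
    show -s * deriv (fun t : ℝ => hermiteH m t s * Real.exp (-(t^2)/(2*s))) y = _
    rw [hd, hermiteH_rec' m y s]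
    have hs' : s ≠ 0 := ne_of_gt hs
    field_simp
    ring

theorem hermite_rodrigues (s : ℝ) (hs : 0 < s) (n : ℕ) (x : ℝ) :
    hermiteH n x s =
      Real.exp (x ^ 2 / (2 * s)) *
        ((fun f : ℝ → ℝ => fun y => -s * deriv f y)^[n]
          (fun y => Real.exp (-(y ^ 2) / (2 * s)))) x := by
  rw [rodrigues_aux s hs n]
  have h : Real.exp (x ^ 2 / (2 * s)) * Real.exp (-(x ^ 2) / (2 * s)) = 1 := by
    rw [← Real.exp_add]
    rw [show x ^ 2 / (2 * s) + -(x ^ 2) / (2 * s) = 0 from by ring]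
    exact Real.exp_zero
  calc hermiteH n x s = hermiteH n x s
      * (Real.exp (x ^ 2 / (2 * s)) * Real.exp (-(x ^ 2) / (2 * s))) := by rw [h, mul_one]
    _ = _ := by ring
end

section
/- For the linear functional Λ determined on polynomials by Λ(H_n(x,s,q)) = δ_{n,0}, one has the orthogonality relation Λ(H_n(x,s,q)·H_m(x,s,q)) = q^{binom(n+1,2)} s^n [n]_q! δ_{n,m}. -/
noncomputable section

/-- The q-integer `[n]_q = (1 - q^n)/(1 - q)`. -/
def qnat (q : ℝ) (n : ℕ) : ℝ := (1 - q ^ n) / (1 - q)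

/-- The q-factorial `[n]_q!`. -/
def qfac (q : ℝ) (n : ℕ) : ℝ := ∏ j ∈ Finset.range n, qnat q (j + 1)

/-- The Gaussian binomial coefficient. -/
def qbinom (q : ℝ) (n k : ℕ) : ℝ := qfac q n / (qfac q k * qfac q (n - k))

/-- The odd q-double factorial `[2k-1]_q!! = [1]_q [3]_q ⋯ [2k-1]_q`. -/
def qdf (q : ℝ) (k : ℕ) : ℝ := ∏ i ∈ Finset.range k, qnat q (2 * i + 1)

/-- The bivariate q-Hermite polynomial
`H n (x,s,q) = ∑_{2k ≤ n} (-s)^k q^(k²) qbinom(n,2k) [2k-1]_q!! x^(n-2k)`. -/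
def qHermite (q s : ℝ) (n : ℕ) (x : ℝ) : ℝ :=
  ∑ k ∈ Finset.range (n / 2 + 1),
    (-s) ^ k * q ^ (k ^ 2) * qbinom q n (2 * k) * qdf q k * x ^ (n - 2 * k)

end

open Polynomial in
/-- The q-Hermite polynomial as an element of `ℝ[X]` (variable `x`). -/
noncomputable def qHermitePoly (q s : ℝ) (n : ℕ) : Polynomial ℝ :=
  ∑ k ∈ Finset.range (n / 2 + 1),
    C ((-s) ^ k * q ^ (k ^ 2) * qbinom q n (2 * k) * qdf q k) * X ^ (n - 2 * k)

open Polynomial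

section Aux
variable {q s : ℝ}

lemma qnat_pos (hq : 0 < q) (hq1 : q < 1) (n : ℕ) : 0 < qnat q (n + 1) := by
  have h : q ^ (n + 1) < 1 := pow_lt_one₀ hq.le hq1 (Nat.succ_ne_zero n)
  exact div_pos (by linarith) (by linarith)

lemma qfac_pos (hq : 0 < q) (hq1 : q < 1) (n : ℕ) : 0 < qfac q n :=
  Finset.prod_pos fun i _ => qnat_pos hq hq1 i

lemma qfac_succ (q : ℝ) (n : ℕ) : qfac q (n + 1) = qfac q n * qnat q (n + 1) :=
  Finset.prod_range_succ _ _

lemma qfac_zero (q : ℝ) : qfac q 0 = 1 := Finset.prod_range_zero _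

lemma qdf_zero (q : ℝ) : qdf q 0 = 1 := Finset.prod_range_zero _

lemma qdf_succ (q : ℝ) (k : ℕ) : qdf q (k + 1) = qdf q k * qnat q (2 * k + 1) :=
  Finset.prod_range_succ _ _

lemma qbinom_zero (hq : 0 < q) (hq1 : q < 1) (n : ℕ) : qbinom q n 0 = 1 := by
  unfold qbinom
  rw [qfac_zero, Nat.sub_zero, one_mul, div_self (qfac_pos hq hq1 n).ne']

lemma qbinom_self (hq : 0 < q) (hq1 : q < 1) (n : ℕ) : qbinom q n n = 1 := by
  unfold qbinom
  rw [Nat.sub_self, qfac_zero, mul_one, div_self (qfac_pos hq hq1 n).ne']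

lemma keyB (hq : 0 < q) (hq1 : q < 1) (i d : ℕ) :
    (qbinom q (i + d + 3) (i + 2) - qbinom q (i + d + 2) (i + 2)) * qnat q (i + 1) * q ^ (i + 1)
      = q ^ (i + d + 2) * qnat q (i + d + 2) * qbinom q (i + d + 1) i := by
  have hA := (qfac_pos hq hq1 (i + d + 1)).ne'
  have hB := (qfac_pos hq hq1 i).ne'
  have hD := (qfac_pos hq hq1 d).ne'
  have hN1 : qnat q (i + 1) ≠ 0 := (qnat_pos hq hq1 i).ne'
  have hN2 : qnat q (i + 2) ≠ 0 := (qnat_pos hq hq1 (i + 1)).ne'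
  have hNd : qnat q (d + 1) ≠ 0 := (qnat_pos hq hq1 d).ne'
  have hq' : (1 : ℝ) - q ≠ 0 := by
    have : q < 1 := hq1
    intro h; linarith [sub_eq_zero.mp h]
  have hsub : qnat q (i + d + 1 + 1 + 1) = qnat q (d + 1) + q ^ (d + 1) * qnat q (i + 1 + 1) := by
    simp only [qnat]
    field_simp
    ring
  have h1 : i + d + 3 - (i + 2) = d + 1 := by omega
  have h2 : i + d + 2 - (i + 2) = d := by omega
  have h3 : i + d + 1 - i = d + 1 := by omega
  unfold qbinom
  rw [h1, h2, h3]
  rw [show i + d + 3 = (i + d + 2) + 1 by omega, qfac_succ q (i + d + 2),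
      show i + d + 2 = (i + d + 1) + 1 by omega, qfac_succ q (i + d + 1),
      show i + 2 = (i + 1) + 1 by omega, qfac_succ q (i + 1), qfac_succ q i,
      qfac_succ q d]
  rw [hsub]
  field_simp
  ring

end Aux

/-- Coefficient of `X^(n-2k)` in `qHermitePoly`, extended by `0` for `2k > n`. -/
noncomputable def cco (q s : ℝ) (n k : ℕ) : ℝ :=
  if 2 * k ≤ n then (-s) ^ k * q ^ k ^ 2 * qbinom q n (2 * k) * qdf q k else 0

section Aux2
open Polynomial
variable {q s : ℝ}

lemma cco_zero (hq : 0 < q) (hq1 : q < 1) (s : ℝ) (n : ℕ) : cco q s n 0 = 1 := by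
  simp [cco, qbinom_zero hq hq1, qdf_zero]

lemma sumrep (s : ℝ) (n N : ℕ) (hN : n / 2 ≤ N) :
    qHermitePoly q s n = ∑ k ∈ Finset.range (N + 1), C (cco q s n k) * X ^ (n - 2 * k) := by
  unfold qHermitePoly
  rw [Finset.sum_congr rfl (fun k hk => ?_)]
  · refine Finset.sum_subset (Finset.range_subset_range.mpr (by omega)) ?_
    intro k _ hk
    simp only [Finset.mem_range, not_lt] at hk
    have h2 : ¬ 2 * k ≤ n := by omega
    simp [cco, h2]
  · have h2 : 2 * k ≤ n := by
      have := Finset.mem_range.mp hk; omega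
    rw [cco, if_pos h2]
end Aux2

section Aux3
open Polynomial
variable {q s : ℝ}

lemma cco_rec (hq : 0 < q) (hq1 : q < 1) (s : ℝ) (k d : ℕ) :
    cco q s (2 * k + 1 + d + 2) (k + 1)
      = cco q s (2 * k + 1 + d + 1) (k + 1)
        - s * q ^ (2 * k + 1 + d + 1) * qnat q (2 * k + 1 + d + 1) * cco q s (2 * k + 1 + d) k := by
  simp only [cco, if_pos (show 2 * (k + 1) ≤ 2 * k + 1 + d + 2 by omega),
    if_pos (show 2 * (k + 1) ≤ 2 * k + 1 + d + 1 by omega),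
    if_pos (show 2 * k ≤ 2 * k + 1 + d by omega)]
  rw [show 2 * k + 1 + d + 2 = 2 * k + d + 3 by omega,
      show 2 * k + 1 + d + 1 = 2 * k + d + 2 by omega,
      show 2 * k + 1 + d = 2 * k + d + 1 by omega,
      show 2 * (k + 1) = 2 * k + 2 by omega,
      qdf_succ, show (k + 1) ^ 2 = k ^ 2 + (2 * k + 1) by ring, pow_add]
  linear_combination ((-s) ^ (k + 1) * q ^ k ^ 2 * qdf q k) * keyB hq hq1 (2 * k) d

lemma cco_bd (hq : 0 < q) (hq1 : q < 1) (s : ℝ) (k : ℕ) :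
    cco q s (2 * k + 2) (k + 1)
      = -(s * q ^ (2 * k + 1) * qnat q (2 * k + 1) * cco q s (2 * k) k) := by
  simp only [cco, if_pos (show 2 * (k + 1) ≤ 2 * k + 2 by omega),
    if_pos (show 2 * k ≤ 2 * k by omega)]
  rw [show 2 * (k + 1) = 2 * k + 2 by omega, qbinom_self hq hq1, qbinom_self hq hq1,
      qdf_succ, show (k + 1) ^ 2 = k ^ 2 + (2 * k + 1) by ring, pow_add]
  ring

lemma recur (hq : 0 < q) (hq1 : q < 1) (s : ℝ) (n : ℕ) :
    qHermitePoly q s (n + 2)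
      = X * qHermitePoly q s (n + 1)
        - C (s * q ^ (n + 1) * qnat q (n + 1)) * qHermitePoly q s n := by
  rw [sumrep s (n + 2) (n / 2 + 1) (by omega), sumrep s (n + 1) (n / 2 + 1) (by omega),
      sumrep s n (n / 2) (by omega), Finset.mul_sum, Finset.mul_sum, eq_sub_iff_add_eq]
  rw [Finset.sum_range_succ' (fun k => C (cco q s (n + 2) k) * X ^ (n + 2 - 2 * k)) (n / 2 + 1),
      Finset.sum_range_succ' (fun k => X * (C (cco q s (n + 1) k) * X ^ (n + 1 - 2 * k))) (n / 2 + 1)]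
  have hzero : (C (cco q s (n + 2) 0) * X ^ (n + 2 - 2 * 0) : Polynomial ℝ)
      = X * (C (cco q s (n + 1) 0) * X ^ (n + 1 - 2 * 0)) := by
    simp [cco_zero hq hq1]
    ring
  have hterm : ∀ k ∈ Finset.range (n / 2 + 1),
      C (cco q s (n + 2) (k + 1)) * X ^ (n + 2 - 2 * (k + 1))
        + C (s * q ^ (n + 1) * qnat q (n + 1)) * (C (cco q s n k) * X ^ (n - 2 * k))
      = X * (C (cco q s (n + 1) (k + 1)) * X ^ (n + 1 - 2 * (k + 1))) := by
    intro k hk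
    have hkn : 2 * k ≤ n := by
      have := Finset.mem_range.mp hk; omega
    by_cases hb : 2 * k + 1 ≤ n
    · -- generic case
      obtain ⟨d, rfl⟩ : ∃ d, n = 2 * k + 1 + d := ⟨n - (2 * k + 1), by omega⟩
      rw [show 2 * k + 1 + d + 2 - 2 * (k + 1) = d + 1 by omega,
          show 2 * k + 1 + d + 1 - 2 * (k + 1) = d by omega,
          show 2 * k + 1 + d - 2 * k = d + 1 by omega,
          cco_rec hq hq1 s k d]
      rw [map_sub]
      simp only [map_mul]
      ring
    · -- boundary case, n = 2k
      have hn : n = 2 * k := by omega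
      subst hn
      rw [show 2 * k + 2 - 2 * (k + 1) = 0 by omega,
          show 2 * k + 1 - 2 * (k + 1) = 0 by omega,
          show 2 * k - 2 * k = 0 by omega]
      have hz : cco q s (2 * k + 1) (k + 1) = 0 := by
        simp only [cco]
        rw [if_neg (by omega)]
      rw [hz, cco_bd hq hq1 s k, map_neg]
      simp only [map_mul, map_zero]
      ring
  rw [add_right_comm, ← Finset.sum_add_distrib, Finset.sum_congr rfl hterm, hzero]

lemma P_zero (hq : 0 < q) (hq1 : q < 1) (s : ℝ) : qHermitePoly q s 0 = 1 := by
  simp [qHermitePoly, qbinom_zero hq hq1, qdf_zero]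

lemma P_one (hq : 0 < q) (hq1 : q < 1) (s : ℝ) : qHermitePoly q s 1 = X := by
  simp [qHermitePoly, qbinom_zero hq hq1, qdf_zero]

lemma xmul (hq : 0 < q) (hq1 : q < 1) (s : ℝ) (m : ℕ) :
    X * qHermitePoly q s m
      = qHermitePoly q s (m + 1) + C (s * q ^ m * qnat q m) * qHermitePoly q s (m - 1) := by
  cases m with
  | zero =>
    simp [P_zero hq hq1, P_one hq hq1, qnat]
  | succ m' =>
    have h1 : m' + 1 + 1 = m' + 2 := rfl
    have h2 : m' + 1 - 1 = m' := rfl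
    rw [h1, h2, recur hq hq1 s m']
    ring
end Aux3

theorem qHermite_orthogonality (q : ℝ) (hq : 0 < q) (hq1 : q < 1) (s : ℝ)
    (Λ : Polynomial ℝ →ₗ[ℝ] ℝ)
    (hΛ : ∀ n : ℕ, Λ (qHermitePoly q s n) = if n = 0 then 1 else 0)
    (n m : ℕ) :
    Λ (qHermitePoly q s n * qHermitePoly q s m)
      = if n = m then q ^ ((n + 1).choose 2) * s ^ n * qfac q n else 0 := by
  have LC : ∀ (c : ℝ) (p : Polynomial ℝ), Λ (Polynomial.C c * p) = c * Λ p := by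
    intro c p
    rw [← Polynomial.smul_eq_C_mul, map_smul, smul_eq_mul]
  have Tsucc : ∀ j : ℕ,
      q ^ ((j + 2).choose 2) * s ^ (j + 1) * qfac q (j + 1)
        = s * q ^ (j + 1) * qnat q (j + 1) * (q ^ ((j + 1).choose 2) * s ^ j * qfac q j) := by
    intro j
    rw [Nat.choose_succ_succ (j + 1) 1, Nat.choose_one_right, pow_add, qfac_succ, pow_succ]
    ring
  have key : ∀ N m : ℕ, Λ (qHermitePoly q s N * qHermitePoly q s m)
      = if N = m then q ^ ((N + 1).choose 2) * s ^ N * qfac q N else 0 := by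
    intro N
    induction N using Nat.strong_induction_on with
    | _ N ih =>
      match N, ih with
      | 0, _ =>
        intro m
        rw [P_zero hq hq1, one_mul, hΛ m]
        rcases eq_or_ne m 0 with rfl | h
        · simp [qfac_zero]
        · simp [h, Ne.symm h]
      | 1, _ =>
        intro m
        rw [P_one hq hq1, xmul hq hq1 s m, map_add, LC, hΛ (m + 1), hΛ (m - 1)]
        match m with
        | 0 => norm_num [qnat]
        | 1 =>
          rw [if_neg (show ¬(1 + 1 = 0) by omega), if_pos (show 1 - 1 = 0 from rfl),
              if_pos (show 1 = 1 from rfl)]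
          have hf : qfac q 1 = qnat q 1 := by simp [qfac]
          have hc : (1 + 1).choose 2 = 1 := by decide
          rw [hf, hc]
          ring
        | (m' + 2) => simp
      | (n + 2), ih =>
        intro m
        rw [recur hq hq1 s n, sub_mul,
            show X * qHermitePoly q s (n + 1) * qHermitePoly q s m
              = qHermitePoly q s (n + 1) * (X * qHermitePoly q s m) from by ring,
            xmul hq hq1 s m, mul_add,
            show qHermitePoly q s (n + 1) * (Polynomial.C (s * q ^ m * qnat q m) * qHermitePoly q s (m - 1))
              = Polynomial.C (s * q ^ m * qnat q m) * (qHermitePoly q s (n + 1) * qHermitePoly q s (m - 1))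
              from by ring,
            show Polynomial.C (s * q ^ (n + 1) * qnat q (n + 1)) * qHermitePoly q s n * qHermitePoly q s m
              = Polynomial.C (s * q ^ (n + 1) * qnat q (n + 1)) * (qHermitePoly q s n * qHermitePoly q s m)
              from by ring]
        simp only [map_sub, map_add, LC]
        rw [ih (n + 1) (by omega) (m + 1), ih (n + 1) (by omega) (m - 1), ih n (by omega) m]
        match m with
        | 0 =>
          rcases Nat.eq_zero_or_pos n with rfl | hn
          · rw [if_pos (show (0:ℕ) + 1 = 0 + 1 from rfl), if_neg (show ¬((0:ℕ) + 1 = 0 - 1) by omega),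
                if_pos (show (0:ℕ) = 0 from rfl), if_neg (show ¬((0:ℕ) + 2 = 0) by omega)]
            simp only [show ∀ a : ℕ, a + 1 + 1 = a + 2 from fun _ => rfl]
            linear_combination Tsucc 0
          · rw [if_neg (show ¬(n + 1 = 0 + 1) by omega), if_neg (show ¬(n + 1 = 0 - 1) by omega),
                if_neg (show ¬(n = 0) by omega), if_neg (show ¬(n + 2 = 0) by omega)]
            ring
        | (m' + 1) =>
          simp only [Nat.add_sub_cancel]
          by_cases h3 : n = m' + 1
          · rw [if_pos (show n + 1 = m' + 1 + 1 by omega), if_neg (show ¬(n + 1 = m') by omega),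
                if_pos h3, if_neg (show ¬(n + 2 = m' + 1) by omega)]
            simp only [show ∀ a : ℕ, a + 1 + 1 = a + 2 from fun _ => rfl]
            linear_combination Tsucc n
          · by_cases h2 : n + 1 = m'
            · subst h2
              rw [if_neg (show ¬(n + 1 = n + 1 + 1 + 1) by omega), if_pos (show n + 1 = n + 1 from rfl),
                  if_neg (show ¬(n = n + 1 + 1) by omega), if_pos (show n + 2 = n + 1 + 1 by omega)]
              have h := Tsucc (n + 1)
              rw [show n + 1 + 1 = n + 2 by omega] at h ⊢
              rw [show n + 1 + 2 = n + 2 + 1 by omega] at h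
              linear_combination -h
            · rw [if_neg (show ¬(n + 1 = m' + 1 + 1) by omega), if_neg (show ¬(n + 1 = m') by omega),
                  if_neg (show ¬(n = m' + 1) by omega), if_neg (show ¬(n + 2 = m' + 1) by omega)]
              ring
  exact key n m
end
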